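/- Let q be a prime power and let n ≥ 1. For a uniformly random n×n matrix A ∈ F_q^{n×n}, we have Pr[per(A) = 0] ≤ 1 − ∏_{i=1}^{n} (1 − q^{-i}) ≤ α_q. -/

import Mathlib

set_option linter.unusedSectionVars false
set_option linter.unusedVariables false


open Finset Matrix

lemma permanent_updateRow_add' {m : Type*} [DecidableEq m] [Fintype m] {R : Type*} [CommSemiring R]
    (M : Matrix m m R) (r : m) (u v : m → R) :
    (M.updateRow r (u + v)).permanent
      = (M.updateRow r u).permanent + (M.updateRow r v).permanent := by
  simp only [Matrix.permanent, ← Finset.sum_add_distrib]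
  refine Finset.sum_congr rfl fun σ _ => ?_
  have key : ∀ w : m → R, (∏ i, M.updateRow r w (σ i) i)
      = w (σ⁻¹ r) * ∏ i ∈ Finset.univ.erase (σ⁻¹ r), M (σ i) i := by
    intro w
    rw [← Finset.mul_prod_erase Finset.univ _ (Finset.mem_univ (σ⁻¹ r))]
    congr 1
    · rw [show σ (σ⁻¹ r) = r from σ.apply_symm_apply r, Matrix.updateRow_self]
    · refine Finset.prod_congr rfl fun i hi => ?_
      rw [Matrix.updateRow_ne]
      intro h
      exact Finset.ne_of_mem_erase hi (by rw [← h]; simp)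
  rw [key, key, key, Pi.add_apply, add_mul]

lemma permanent_succ_col_zero {m : ℕ} {R : Type*} [CommSemiring R]
    (M : Matrix (Fin (m + 1)) (Fin (m + 1)) R) (h : ∀ i, i ≠ 0 → M i 0 = 0) :
    M.permanent = M 0 0 * (M.submatrix Fin.succ Fin.succ).permanent := by
  rw [Matrix.permanent, ← Equiv.sum_comp (Equiv.Perm.decomposeFin (n := m)).symm, Fintype.sum_prod_type]
  rw [Finset.sum_eq_single (0 : Fin (m + 1))]
  · rw [Matrix.permanent, Finset.mul_sum]
    refine Finset.sum_congr rfl fun τ _ => ?_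
    rw [Fin.prod_univ_succ]
    simp [Equiv.Perm.decomposeFin_symm_apply_zero, Equiv.Perm.decomposeFin_symm_apply_succ,
      Equiv.swap_self]
  · intro p _ hp
    rw [Finset.sum_eq_zero]
    intro τ _
    rw [Fin.prod_univ_succ]
    simp [Equiv.Perm.decomposeFin_symm_apply_zero, h p hp]
  · simp

lemma permanent_succ_row_zero {m : ℕ} {R : Type*} [CommSemiring R]
    (M : Matrix (Fin (m + 1)) (Fin (m + 1)) R) (h : ∀ c, c ≠ 0 → M 0 c = 0) :
    M.permanent = M 0 0 * (M.submatrix Fin.succ Fin.succ).permanent := by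
  rw [← Matrix.permanent_transpose M, permanent_succ_col_zero Mᵀ (fun i hi => h i hi)]
  rw [show (Mᵀ).submatrix Fin.succ Fin.succ = (M.submatrix Fin.succ Fin.succ)ᵀ from rfl,
    Matrix.permanent_transpose]
  rfl

section Main

variable {F : Type*} [Field F] [Fintype F] {n k : ℕ}

/-- `B` has a `k × k` submatrix (choice of `k` columns) with nonzero permanent. -/
def goodMat (B : Matrix (Fin k) (Fin n) F) : Prop :=
  ∃ e : Fin k ↪ Fin n, (B.submatrix id ⇑e).permanent ≠ 0

def appendRow (B : Matrix (Fin k) (Fin n) F) (x : Fin n → F) :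
    Matrix (Fin (k + 1)) (Fin n) F :=
  Matrix.of (Fin.cons x (Matrix.of.symm B))

@[simp] lemma appendRow_zero (B : Matrix (Fin k) (Fin n) F) (x : Fin n → F) (j : Fin n) :
    appendRow B x 0 j = x j := rfl

@[simp] lemma appendRow_succ (B : Matrix (Fin k) (Fin n) F) (x : Fin n → F)
    (i : Fin k) (j : Fin n) : appendRow B x i.succ j = B i j := by
  simp [appendRow, Fin.cons_succ]

lemma subUpdate (B : Matrix (Fin k) (Fin n) F) (x y : Fin n → F) (c : Fin (k+1) → Fin n) :
    (appendRow B x).submatrix id c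
      = ((appendRow B y).submatrix id c).updateRow 0 (fun j => x (c j)) := by
  ext r j
  refine Fin.cases ?_ (fun i => ?_) r
  · simp
  · rw [Matrix.updateRow_ne (Fin.succ_ne_zero i)]
    simp

lemma perm_sub_of_vanish (B : Matrix (Fin k) (Fin n) F) (d : Fin n → F)
    (e : Fin k ↪ Fin n) (j : Fin n) (hd : ∀ i, d (e i) = 0) :
    ((appendRow B d).submatrix id (Fin.cons j ⇑e)).permanent
      = d j * (B.submatrix id ⇑e).permanent := by
  rw [permanent_succ_row_zero]
  · have h1 : (((appendRow B d).submatrix id (Fin.cons j ⇑e)).submatrix Fin.succ Fin.succ)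
        = B.submatrix id ⇑e := by
      ext i c
      simp [Fin.cons_succ]
    rw [h1]
    simp
  · intro c hc
    obtain ⟨c', rfl⟩ := Fin.eq_succ_of_ne_zero hc
    simp [Fin.cons_succ, hd]

lemma card_bad_rows (B : Matrix (Fin k) (Fin n) F) (hB : goodMat B) :
    Nat.card {x : Fin n → F // ¬ goodMat (appendRow B x)} ≤ Fintype.card F ^ k := by
  classical
  obtain ⟨e, he⟩ := hB
  have : Nat.card (Fin k → F) = Fintype.card F ^ k := by
    simp [Nat.card_eq_fintype_card]
  rw [← this]
  refine Nat.card_le_card_of_injective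
    (fun x => fun i => (x : {x : Fin n → F // ¬ goodMat (appendRow B x)}).1 (e i)) ?_
  rintro ⟨x, hx⟩ ⟨x', hx'⟩ hxx
  have hd : ∀ i, (x - x') (e i) = 0 := by
    intro i
    have := congrFun hxx i
    simp only at this
    simp [this]
  have key : ∀ j : Fin n, x j = x' j := by
    intro j
    by_cases hj : ∃ i, e i = j
    · obtain ⟨i, rfl⟩ := hj
      exact congrFun hxx i
    · push_neg at hj
      have hinj : Function.Injective (Fin.cons j ⇑e : Fin (k + 1) → Fin n) :=
        Fin.cons_injective_of_injective (by simpa [Set.range, eq_comm] using hj) e.injective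
      have h0 : ((appendRow B x).submatrix id (Fin.cons j ⇑e)).permanent = 0 := by
        by_contra h
        exact hx ⟨⟨Fin.cons j ⇑e, hinj⟩, h⟩
      have h0' : ((appendRow B x').submatrix id (Fin.cons j ⇑e)).permanent = 0 := by
        by_contra h
        exact hx' ⟨⟨Fin.cons j ⇑e, hinj⟩, h⟩
      have hsplit : ((appendRow B x).submatrix id (Fin.cons j ⇑e)).permanent
          = ((appendRow B x').submatrix id (Fin.cons j ⇑e)).permanent
            + ((appendRow B (x - x')).submatrix id (Fin.cons j ⇑e)).permanent := by
        have hxe : ∀ g : Fin (k + 1) → Fin n, (fun c => x (g c))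
            = ((fun c => x' (g c)) + (fun c => (x - x') (g c)) : Fin (k + 1) → F) := by
          intro g; funext c; simp
        rw [subUpdate B x x' (Fin.cons j ⇑e), hxe (Fin.cons j ⇑e), permanent_updateRow_add']
        congr 1
        · rw [← subUpdate B x' x' (Fin.cons j ⇑e)]
        · rw [← subUpdate B (x - x') x' (Fin.cons j ⇑e)]
      rw [h0, h0', perm_sub_of_vanish B (x - x') e j hd, zero_add] at hsplit
      have : (x - x') j = 0 := (mul_eq_zero.mp hsplit.symm).resolve_right he
      simpa [sub_eq_zero] using this
  exact Subtype.ext (funext key)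

end Main

section Main2

variable {F : Type*} [Field F] [Fintype F] {n k : ℕ}

lemma card_good_rows (B : Matrix (Fin k) (Fin n) F) (hB : goodMat B) :
    Fintype.card F ^ n - Fintype.card F ^ k
      ≤ Nat.card {x : Fin n → F // goodMat (appendRow B x)} := by
  classical
  have h1 := card_bad_rows B hB
  rw [Nat.card_eq_fintype_card] at h1 ⊢
  have hc : Fintype.card (Fin n → F) = Fintype.card F ^ n := by
    simp [Fintype.card_fun]
  have h2 : Fintype.card {x : Fin n → F // ¬ goodMat (appendRow B x)}
      = Fintype.card (Fin n → F) - Fintype.card {x : Fin n → F // goodMat (appendRow B x)} :=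
    Fintype.card_subtype_compl _
  have h3 : Fintype.card {x : Fin n → F // goodMat (appendRow B x)}
      ≤ Fintype.card (Fin n → F) := Fintype.card_subtype_le _
  omega

lemma goodMat_zero (B : Matrix (Fin 0) (Fin n) F) : goodMat B := by
  refine ⟨⟨Fin.elim0, fun a => a.elim0⟩, ?_⟩
  rw [Matrix.permanent_isEmpty]
  exact one_ne_zero

/-- the pair decomposition -/
def rowEquiv : (Matrix (Fin k) (Fin n) F × (Fin n → F)) ≃ Matrix (Fin (k + 1)) (Fin n) F where
  toFun p := appendRow p.1 p.2
  invFun C := (Matrix.of fun i j => C i.succ j, fun j => C 0 j)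
  left_inv p := by
    ext i j
    · simp
    · simp
  right_inv C := by
    ext i j
    refine Fin.cases ?_ (fun i' => ?_) i <;> simp

lemma good_count (F : Type*) [Field F] [Fintype F] (n : ℕ) :
    ∀ k, k ≤ n →
    (Fintype.card F : ℝ) ^ (k * n)
        * ∏ i ∈ Finset.range k, (1 - ((Fintype.card F : ℝ))⁻¹ ^ (n - i))
      ≤ Nat.card {B : Matrix (Fin k) (Fin n) F // goodMat B} := by
  classical
  have hq : (1 : ℕ) < Fintype.card F := Fintype.one_lt_card
  have hq0 : (0 : ℝ) < (Fintype.card F : ℝ) := by positivity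
  intro k
  induction k with
  | zero =>
    intro _
    have : Nat.card {B : Matrix (Fin 0) (Fin n) F // goodMat B}
        = Nat.card (Matrix (Fin 0) (Fin n) F) :=
      Nat.card_congr (Equiv.subtypeUnivEquiv goodMat_zero)
    rw [this]
    haveI : Unique (Matrix (Fin 0) (Fin n) F) :=
      ⟨⟨0⟩, fun M => by ext i j; exact i.elim0⟩
    simp [Nat.card_unique]
  | succ k ih =>
    intro hk1
    have hk : k ≤ n := by omega
    -- cardinal identity
    have E2 : {p : Matrix (Fin k) (Fin n) F × (Fin n → F) // goodMat (appendRow p.1 p.2)}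
        ≃ {C : Matrix (Fin (k + 1)) (Fin n) F // goodMat C} :=
      Equiv.subtypeEquiv rowEquiv (fun p => Iff.rfl)
    have E3 : {p : Matrix (Fin k) (Fin n) F × (Fin n → F) // goodMat (appendRow p.1 p.2)}
        ≃ Σ B : Matrix (Fin k) (Fin n) F, {x : Fin n → F // goodMat (appendRow B x)} :=
      Equiv.subtypeProdEquivSigmaSubtype
        (fun (B : Matrix (Fin k) (Fin n) F) (x : Fin n → F) => goodMat (appendRow B x))
    have e1 : Nat.card {C : Matrix (Fin (k + 1)) (Fin n) F // goodMat C}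
        = ∑ B : Matrix (Fin k) (Fin n) F,
            Fintype.card {x : Fin n → F // goodMat (appendRow B x)} := by
      rw [Nat.card_congr (E2.symm.trans E3), Nat.card_eq_fintype_card, Fintype.card_sigma]
    -- lower bound the sum
    have e2 : (Finset.univ.filter
          (fun B : Matrix (Fin k) (Fin n) F => goodMat B)).card
            * (Fintype.card F ^ n - Fintype.card F ^ k)
        ≤ ∑ B : Matrix (Fin k) (Fin n) F,
            Fintype.card {x : Fin n → F // goodMat (appendRow B x)} := by
      rw [← smul_eq_mul, ← Finset.sum_const]
      refine le_trans (Finset.sum_le_sum ?_) (Finset.sum_le_sum_of_subset (Finset.subset_univ _))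
      intro B hB
      have := card_good_rows B (Finset.mem_filter.mp hB).2
      rwa [Nat.card_eq_fintype_card] at this
    have e3 : Nat.card {B : Matrix (Fin k) (Fin n) F // goodMat B}
        = (Finset.univ.filter (fun B : Matrix (Fin k) (Fin n) F => goodMat B)).card := by
      rw [Nat.card_eq_fintype_card, Fintype.card_subtype]
    -- real computation
    have hpow : (Fintype.card F : ℝ) ^ n * (1 - ((Fintype.card F : ℝ))⁻¹ ^ (n - k))
        = ((Fintype.card F ^ n - Fintype.card F ^ k : ℕ) : ℝ) := by
      have hle : Fintype.card F ^ k ≤ Fintype.card F ^ n :=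
        Nat.pow_le_pow_right (by omega) hk
      rw [Nat.cast_sub hle]
      push_cast
      have h2' : (Fintype.card F : ℝ) ^ k * (Fintype.card F : ℝ) ^ (n - k)
          = (Fintype.card F : ℝ) ^ n := by
        rw [← pow_add]; congr 1; omega
      have h2 : (Fintype.card F : ℝ) ^ n * ((Fintype.card F : ℝ))⁻¹ ^ (n - k)
          = (Fintype.card F : ℝ) ^ k := by
        rw [inv_pow, ← h2', mul_inv_cancel_right₀ (by positivity)]
      rw [mul_sub, mul_one, h2]
    have hprod0 : (0 : ℝ) ≤ (Fintype.card F : ℝ) ^ (k * n)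
        * ∏ i ∈ Finset.range k, (1 - ((Fintype.card F : ℝ))⁻¹ ^ (n - i)) := by
      have : ∀ i ∈ Finset.range k, (0 : ℝ) ≤ 1 - ((Fintype.card F : ℝ))⁻¹ ^ (n - i) := by
        intro i _
        have h1 : ((Fintype.card F : ℝ))⁻¹ ^ (n - i) ≤ 1 := by
          apply pow_le_one₀ (by positivity)
          rw [inv_le_one_iff₀]
          right
          exact_mod_cast hq.le
        linarith
      have := Finset.prod_nonneg this
      positivity
    calc (Fintype.card F : ℝ) ^ ((k + 1) * n)
          * ∏ i ∈ Finset.range (k + 1), (1 - ((Fintype.card F : ℝ))⁻¹ ^ (n - i))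
        = ((Fintype.card F : ℝ) ^ (k * n)
            * ∏ i ∈ Finset.range k, (1 - ((Fintype.card F : ℝ))⁻¹ ^ (n - i)))
          * ((Fintype.card F : ℝ) ^ n * (1 - ((Fintype.card F : ℝ))⁻¹ ^ (n - k))) := by
          rw [Finset.prod_range_succ, show (k + 1) * n = k * n + n by ring, pow_add]
          ring
      _ ≤ (Nat.card {B : Matrix (Fin k) (Fin n) F // goodMat B} : ℝ)
          * ((Fintype.card F ^ n - Fintype.card F ^ k : ℕ) : ℝ) := by
          rw [← hpow]
          apply mul_le_mul (ih hk) le_rfl (by rw [hpow]; positivity)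
          exact le_trans hprod0 (ih hk)
      _ ≤ (Nat.card {C : Matrix (Fin (k + 1)) (Fin n) F // goodMat C} : ℝ) := by
          rw [e3, e1]
          exact_mod_cast e2

end Main2

section Final

lemma goodMat_top {F : Type*} [Field F] [Fintype F] {n : ℕ} (A : Matrix (Fin n) (Fin n) F) :
    goodMat A ↔ A.permanent ≠ 0 := by
  constructor
  · rintro ⟨e, he⟩
    have hbij : Function.Bijective ⇑e := Finite.injective_iff_bijective.mp e.injective
    have : A.submatrix id ⇑e = A.submatrix id ⇑(Equiv.ofBijective ⇑e hbij) := rfl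
    rwa [this, Matrix.permanent_permute_rows] at he
  · intro h
    exact ⟨Function.Embedding.refl _, h⟩

lemma prod_reindex (q : ℝ) (n : ℕ) :
    ∏ i ∈ Finset.range n, (1 - q⁻¹ ^ (n - i)) = ∏ i ∈ Finset.Icc 1 n, (1 - q⁻¹ ^ i) := by
  rw [← Finset.Ico_add_one_right_eq_Icc, Finset.prod_Ico_eq_prod_range, Nat.add_sub_cancel,
    ← Finset.prod_range_reflect]
  refine Finset.prod_congr rfl fun i hi => ?_
  rw [Finset.mem_range] at hi
  have : n - (n - 1 - i) = 1 + i := by omega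
  rw [this]

lemma prod_Icc_one (q : ℝ) (n : ℕ) :
    ∏ i ∈ Finset.Icc 1 n, (1 - q⁻¹ ^ i) = ∏ i ∈ Finset.range n, (1 - q⁻¹ ^ (i + 1)) := by
  rw [← Finset.Ico_add_one_right_eq_Icc, Finset.prod_Ico_eq_prod_range, Nat.add_sub_cancel]
  refine Finset.prod_congr rfl fun i _ => ?_
  rw [Nat.add_comm]

lemma tprod_le_partial {f : ℕ → ℝ} (h0 : ∀ i, 0 ≤ f i) (h1 : ∀ i, f i ≤ 1) (n : ℕ) :
    (∏' i, f i) ≤ ∏ i ∈ Finset.range n, f i := by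
  have hanti : Antitone (fun s : Finset ℕ => ∏ i ∈ s, f i) := by
    intro s t hst
    show (∏ i ∈ t, f i) ≤ ∏ i ∈ s, f i
    rw [← Finset.prod_sdiff hst]
    calc (∏ i ∈ t \ s, f i) * ∏ i ∈ s, f i
        ≤ 1 * ∏ i ∈ s, f i := by
          apply mul_le_mul_of_nonneg_right
          · exact Finset.prod_le_one (fun i _ => h0 i) (fun i _ => h1 i)
          · exact Finset.prod_nonneg fun i _ => h0 i
      _ = ∏ i ∈ s, f i := one_mul _
  have hbdd : BddBelow (Set.range fun s : Finset ℕ => ∏ i ∈ s, f i) := by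
    refine ⟨0, ?_⟩
    rintro _ ⟨s, rfl⟩
    exact Finset.prod_nonneg fun i _ => h0 i
  have hprod : HasProd f (⨅ s : Finset ℕ, ∏ i ∈ s, f i) :=
    tendsto_atTop_ciInf hanti hbdd
  rw [hprod.tprod_eq]
  exact ciInf_le hbdd (Finset.range n)

end Final

/-- For a uniformly random `n × n` matrix `A` over a finite field `F` with `q` elements (`n ≥ 1`),
`Pr[per A = 0] ≤ 1 - ∏_{i=1}^{n} (1 - q^{-i}) ≤ α_q`, where `α_q = 1 - ∏_{i=1}^∞ (1 - q⁻ⁱ)`. -/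
theorem permanent_zero_probability_le_alpha (F : Type*) [Field F] [Fintype F]
    (n : ℕ) (hn : 1 ≤ n) :
    (Nat.card {A : Matrix (Fin n) (Fin n) F // A.permanent = 0} : ℝ) /
        (Fintype.card F : ℝ) ^ (n ^ 2)
      ≤ 1 - ∏ i ∈ Finset.Icc 1 n, (1 - ((Fintype.card F : ℝ))⁻¹ ^ i) ∧
    1 - ∏ i ∈ Finset.Icc 1 n, (1 - ((Fintype.card F : ℝ))⁻¹ ^ i)
      ≤ 1 - ∏' i : ℕ, (1 - ((Fintype.card F : ℝ))⁻¹ ^ (i + 1)) := by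
  classical
  have hq : (1 : ℕ) < Fintype.card F := Fintype.one_lt_card
  have hq0 : (0 : ℝ) < (Fintype.card F : ℝ) := by positivity
  have hqi1 : ((Fintype.card F : ℝ))⁻¹ ≤ 1 := by
    rw [inv_le_one_iff₀]; right; exact_mod_cast hq.le
  have hfac0 : ∀ i : ℕ, (0 : ℝ) ≤ 1 - ((Fintype.card F : ℝ))⁻¹ ^ (i + 1) := by
    intro i
    have : ((Fintype.card F : ℝ))⁻¹ ^ (i + 1) ≤ 1 := pow_le_one₀ (by positivity) hqi1
    linarith
  have hfac1 : ∀ i : ℕ, (1 - ((Fintype.card F : ℝ))⁻¹ ^ (i + 1)) ≤ 1 := by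
    intro i
    have : (0:ℝ) ≤ ((Fintype.card F : ℝ))⁻¹ ^ (i + 1) := by positivity
    linarith
  constructor
  · -- main bound
    have hgc := good_count F n n le_rfl
    rw [prod_reindex] at hgc
    have htot : Fintype.card (Matrix (Fin n) (Fin n) F) = Fintype.card F ^ (n ^ 2) := by
      have : Fintype.card (Matrix (Fin n) (Fin n) F) = Fintype.card (Fin n → Fin n → F) := rfl
      rw [this]
      simp [Fintype.card_fun]
      ring
    have hNle : Fintype.card {B : Matrix (Fin n) (Fin n) F // goodMat B}
        ≤ Fintype.card F ^ (n ^ 2) := by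
      rw [← htot]; exact Fintype.card_subtype_le _
    have hcompl : Nat.card {A : Matrix (Fin n) (Fin n) F // A.permanent = 0}
        = Fintype.card F ^ (n ^ 2)
          - Fintype.card {B : Matrix (Fin n) (Fin n) F // goodMat B} := by
      rw [Nat.card_eq_fintype_card]
      have h1 : Fintype.card {B : Matrix (Fin n) (Fin n) F // goodMat B}
          = Fintype.card {A : Matrix (Fin n) (Fin n) F // ¬ A.permanent = 0} :=
        Fintype.card_congr (Equiv.subtypeEquiv (Equiv.refl _) (fun A => by
          simp [goodMat_top]))
      rw [h1, Fintype.card_subtype_compl, htot]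
      have := Fintype.card_subtype_le (fun A : Matrix (Fin n) (Fin n) F => A.permanent = 0)
      omega
    rw [hcompl]
    rw [div_le_iff₀ (by positivity)]
    rw [Nat.cast_sub hNle]
    rw [Nat.card_eq_fintype_card] at hgc
    have hnn : n * n = n ^ 2 := by ring
    rw [hnn] at hgc
    push_cast
    nlinarith [hgc]
  · -- tail bound
    have h := tprod_le_partial hfac0 hfac1 n
    rw [prod_Icc_one]
    linarith
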